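/- Fix a ∈ ℝ with a ≠ −2. Let γ(u) = [[1, e^{2iu}],[e^{−2iu}, 1]], let L(u) = a·γ(u) − 2e₃ with e₃ = [[1,0],[0,−1]], and set Λ(u) = (1/2)(γ̇(u) − i·L(u)) ∈ M₂(ℂ). Then for every u ∈ ℝ: Λ₂₁(u) ≠ 0, Λ₂₁(u)γ₁₁(u) − Λ₁₁(u)γ₂₁(u) ≠ 0, and the Weierstrass data of the Björling problem are G(u) := Λ₁₁(u)/Λ₂₁(u) = ((a−2)/(a+2))·e^{2iu} and ω(u) := Λ₂₁(u)²/(Λ₂₁(u)γ₁₁(u) − Λ₁₁(u)γ₂₁(u)) = (−i(a+2)²/8)·e^{−2iu}. -/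

import Mathlib

open Matrix

/-- The elliptic circle in the light cone. -/
noncomputable def γE (u : ℝ) : Matrix (Fin 2) (Fin 2) ℂ :=
  !![1, Complex.exp (2 * Complex.I * u); Complex.exp (-(2 * Complex.I * u)), 1]

/-- Its derivative. -/
noncomputable def γEdot (u : ℝ) : Matrix (Fin 2) (Fin 2) ℂ :=
  !![0, 2 * Complex.I * Complex.exp (2 * Complex.I * u);
     -(2 * Complex.I) * Complex.exp (-(2 * Complex.I * u)), 0]

/-- e₃ = [[1,0],[0,−1]]. -/
noncomputable def e3 : Matrix (Fin 2) (Fin 2) ℂ := !![1, 0; 0, -1]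

/-- The prescribed tangent field L = aγ − 2e₃. -/
noncomputable def Lfield (a : ℝ) (u : ℝ) : Matrix (Fin 2) (Fin 2) ℂ :=
  (a : ℂ) • γE u - (2 : ℂ) • e3

/-- Λ = (1/2)(γ̇ − iL). -/
noncomputable def ΛE (a : ℝ) (u : ℝ) : Matrix (Fin 2) (Fin 2) ℂ :=
  (1 / 2 : ℂ) • (γEdot u - Complex.I • Lfield a u)

lemma hexpc (c : ℂ) (u : ℝ) :
    HasDerivAt (fun u' : ℝ => Complex.exp (c * u')) (c * Complex.exp (c * u)) u := by
  have h1 : HasDerivAt (fun w : ℂ => Complex.exp (c * w)) (c * Complex.exp (c * u)) (u : ℂ) := by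
    have h2 := (Complex.hasDerivAt_exp (c * (u : ℂ))).comp (u : ℂ)
      ((hasDerivAt_id (u : ℂ)).const_mul c)
    rw [show c * Complex.exp (c * u) = Complex.exp (c * u) * (c * 1) by ring]
    exact h2
  exact h1.comp_ofReal

lemma aux1 (b E F : ℂ) (hF : F ≠ 0) (hb : b + 2 ≠ 0) (h : E * F = 1) :
    (-Complex.I * (b - 2) / 2) / (-Complex.I * (b + 2) / 2 * F)
      = ((b - 2) / (b + 2)) * E := by
  have hI : Complex.I ≠ 0 := Complex.I_ne_zero
  field_simp
  linear_combination (2 - b) * h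

lemma aux2 (b F : ℂ) (hF : F ≠ 0) (hI : Complex.I ≠ 0) :
    (-Complex.I * (b + 2) / 2 * F) ^ 2 / (-2 * Complex.I * F)
      = -Complex.I * (b + 2) ^ 2 / 8 * F := by
  field_simp
  ring

theorem elliptic_catenoid_weierstrass_data (a : ℝ) (ha : a ≠ -2) (u : ℝ) :
    (∀ i j : Fin 2, HasDerivAt (fun u' => γE u' i j) (γEdot u i j) u) ∧
    ΛE a u 1 0 ≠ 0 ∧
    ΛE a u 1 0 * γE u 0 0 - ΛE a u 0 0 * γE u 1 0 ≠ 0 ∧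
    ΛE a u 0 0 / ΛE a u 1 0
      = (((a : ℂ) - 2) / ((a : ℂ) + 2)) * Complex.exp (2 * Complex.I * u) ∧
    ΛE a u 1 0 ^ 2 / (ΛE a u 1 0 * γE u 0 0 - ΛE a u 0 0 * γE u 1 0)
      = (-Complex.I * ((a : ℂ) + 2) ^ 2 / 8) * Complex.exp (-(2 * Complex.I * u)) := by
  have ha2 : (a : ℂ) + 2 ≠ 0 := by
    intro h
    apply ha
    have : (a : ℂ) = ((-2 : ℝ) : ℂ) := by push_cast; linear_combination h
    exact_mod_cast this
  have hI : Complex.I ≠ 0 := Complex.I_ne_zero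
  have hE : Complex.exp (2 * Complex.I * u) ≠ 0 := Complex.exp_ne_zero _
  have hF : Complex.exp (-(2 * Complex.I * u)) ≠ 0 := Complex.exp_ne_zero _
  have hEF : Complex.exp (2 * Complex.I * u) * Complex.exp (-(2 * Complex.I * u)) = 1 := by
    rw [← Complex.exp_add]; simp
  have hΛ00 : ΛE a u 0 0 = -Complex.I * ((a : ℂ) - 2) / 2 := by
    simp [ΛE, Lfield, γE, γEdot, e3]; ring
  have hΛ10 : ΛE a u 1 0
      = -Complex.I * ((a : ℂ) + 2) / 2 * Complex.exp (-(2 * Complex.I * u)) := by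
    simp [ΛE, Lfield, γE, γEdot, e3]; ring
  have hγ00 : γE u 0 0 = 1 := by simp [γE]
  have hγ10 : γE u 1 0 = Complex.exp (-(2 * Complex.I * u)) := by simp [γE]
  have hden : ΛE a u 1 0 * γE u 0 0 - ΛE a u 0 0 * γE u 1 0
      = -2 * Complex.I * Complex.exp (-(2 * Complex.I * u)) := by
    rw [hΛ00, hΛ10, hγ00, hγ10]; ring
  refine ⟨?_, ?_, ?_, ?_, ?_⟩
  · intro i j
    fin_cases i <;> fin_cases j <;> simp [γE, γEdot]
    · exact hasDerivAt_const u 1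
    · exact hexpc (2 * Complex.I) u
    · simpa [neg_mul] using hexpc (-(2 * Complex.I)) u
    · exact hasDerivAt_const u 1
  · rw [hΛ10]
    exact mul_ne_zero (by simp [hI, ha2]) hF
  · rw [hden]
    exact mul_ne_zero (by simp [hI]) hF
  · rw [hΛ00, hΛ10]
    exact aux1 _ _ _ hF ha2 hEF
  · rw [hden, hΛ10]
    exact aux2 _ _ hF hI
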